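/- Fix Ex ⊆ ℕ finite. For the anti-factor join recurrence over U = [0, max Ex] ∪ {⊤}: given tables c_1, c_2 : (X → U) × ℕ → ℤ, define c[f, s] = Σ_{f_1 ⊕ f_2 = f} Σ_{s_1 + s_2 = s} c_1[f_1, s_1]·c_2[f_2, s_2], and define the zeta transform ζ(c)(f, s) = Σ_{g ⪯ f} c[g, s], where g ⪯ f iff g(x) = f(x) or f(x) = ⊤ pointwise. Then for any f with f^{-1}(⊤) = S, writing f = ⟨f^⊤, f^0⟩ with f^0 taking values in [0, max Ex] on X∖S: ζ(c)(f, s) = Σ_{f_1 + f_2 = f^0} Σ_{s_1 + s_2 = s} ζ(c_1)(⟨f^⊤, f_1⟩, s_1) · ζ(c_2)(⟨f^⊤, f_2⟩, s_2). -/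

import Mathlib

open scoped Classical

/-- The state set `U = {0,…,M} ∪ {⊤}`, with `⊤` modelled by `none`. -/
abbrev AFU (M : ℕ) := Option (Fin (M + 1))

/-- `u ⊕ v = ⊤` if `u = ⊤`, `v = ⊤`, or `u + v > M`; else `u + v`. -/
def afOplus {M : ℕ} : AFU M → AFU M → AFU M
  | none, _ => none
  | _, none => none
  | some u, some v =>
      if h : (u : ℕ) + (v : ℕ) ≤ M then some ⟨(u : ℕ) + v, Nat.lt_succ_of_le h⟩
      else none

/-- The zeta transform `ζ(c)(f, s) = Σ_{g ⪯ f} c[g, s]`, where `g ⪯ f` iff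
pointwise `g x = f x` or `f x = ⊤`. -/
noncomputable def afZeta {X : Type*} [Fintype X] {M : ℕ}
    (c : (X → AFU M) → ℕ → ℤ) (f : X → AFU M) (s : ℕ) : ℤ :=
  ∑ g : X → AFU M, if ∀ x, g x = f x ∨ f x = none then c g s else 0

/-- The join-node table:
`c[f, s] = Σ_{f₁ ⊕ f₂ = f} Σ_{s₁ + s₂ = s} c₁[f₁, s₁] · c₂[f₂, s₂]`. -/
noncomputable def afJoin {X : Type*} [Fintype X] {M : ℕ}
    (c₁ c₂ : (X → AFU M) → ℕ → ℤ) (f : X → AFU M) (s : ℕ) : ℤ :=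
  ∑ f₁ : X → AFU M, ∑ f₂ : X → AFU M,
    if (fun x => afOplus (f₁ x) (f₂ x)) = f then
      ∑ p ∈ Finset.HasAntidiagonal.antidiagonal s, c₁ f₁ p.1 * c₂ f₂ p.2
    else 0

/-- `⟨f^⊤, f₁⟩`: the function taking value `⊤` on `S = f⁻¹(⊤)` and `f₁`
elsewhere. -/
noncomputable def afGlue {X : Type*} {M : ℕ} (f : X → AFU M)
    (f₁ : {x : X // f x ≠ none} → Fin (M + 1)) : X → AFU M :=
  fun x => if h : f x = none then none else some (f₁ ⟨x, h⟩)

/-- The zeta transform of the join table factorizes: for any `f` (with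
`S = f⁻¹(⊤)`) and `s`,
`ζ(c)(f,s) = Σ_{f₁ + f₂ = f⁰} Σ_{s₁+s₂=s} ζ(c₁)(⟨f^⊤,f₁⟩,s₁)·ζ(c₂)(⟨f^⊤,f₂⟩,s₂)`,
where `f₁, f₂` range over `[0,M]`-valued functions on `X ∖ S` summing
pointwise (ordinary addition) to `f⁰`. -/

private lemma sum4comm {ι κ : Type*} [Fintype ι] [Fintype κ] (F : ι → ι → κ → κ → ℤ) :
    (∑ a : ι, ∑ a' : ι, ∑ b : κ, ∑ b' : κ, F a a' b b')
    = ∑ b : κ, ∑ b' : κ, ∑ a : ι, ∑ a' : ι, F a a' b b' := by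
  rw [Finset.sum_congr rfl fun a _ =>
    Finset.sum_comm (f := fun a' b => ∑ b' : κ, F a a' b b')]
  rw [Finset.sum_comm]
  refine Finset.sum_congr rfl fun b _ => ?_
  rw [Finset.sum_congr rfl fun a _ =>
    Finset.sum_comm (f := fun a' b' => F a a' b b')]
  rw [Finset.sum_comm]

theorem stmt13 {X : Type*} [Fintype X] (M : ℕ)
    (c₁ c₂ : (X → AFU M) → ℕ → ℤ) (f : X → AFU M) (s : ℕ) :
    afZeta (afJoin c₁ c₂) f s =
      ∑ f₁ : {x : X // f x ≠ none} → Fin (M + 1),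
      ∑ f₂ : {x : X // f x ≠ none} → Fin (M + 1),
        if ∀ x : {x : X // f x ≠ none},
            (f₁ x : ℕ) + (f₂ x : ℕ) = (((f x.1).getD 0 : Fin (M + 1)) : ℕ) then
          ∑ p ∈ Finset.HasAntidiagonal.antidiagonal s,
            afZeta c₁ (afGlue f f₁) p.1 * afZeta c₂ (afGlue f f₂) p.2
        else 0 := by
  classical
  set T : (X → AFU M) → (X → AFU M) → ℤ := fun h₁ h₂ =>
    ∑ p ∈ Finset.HasAntidiagonal.antidiagonal s, c₁ h₁ p.1 * c₂ h₂ p.2 with hT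
  -- LHS as a double sum over (h₁, h₂)
  have lhs_eq : afZeta (afJoin c₁ c₂) f s =
      ∑ h₁ : X → AFU M, ∑ h₂ : X → AFU M,
        if (∀ x, afOplus (h₁ x) (h₂ x) = f x ∨ f x = none) then T h₁ h₂ else 0 := by
    unfold afZeta afJoin
    have step1 : ∀ g : X → AFU M,
        (if (∀ x, g x = f x ∨ f x = none) then
          (∑ h₁ : X → AFU M, ∑ h₂ : X → AFU M,
            if (fun x => afOplus (h₁ x) (h₂ x)) = g then T h₁ h₂ else 0) else 0)
        = ∑ h₁ : X → AFU M, ∑ h₂ : X → AFU M,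
            if ((fun x => afOplus (h₁ x) (h₂ x)) = g ∧ (∀ x, g x = f x ∨ f x = none))
              then T h₁ h₂ else 0 := by
      intro g
      by_cases hg : ∀ x, g x = f x ∨ f x = none
      · rw [if_pos hg]
        exact Finset.sum_congr rfl fun h₁ _ => Finset.sum_congr rfl fun h₂ _ =>
          (if_congr (and_iff_left hg) rfl rfl).symm
      · rw [if_neg hg]
        exact (Finset.sum_eq_zero fun h₁ _ => Finset.sum_eq_zero fun h₂ _ =>
          if_neg fun h => hg h.2).symm
    rw [Finset.sum_congr rfl fun g _ => step1 g, Finset.sum_comm]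
    refine Finset.sum_congr rfl fun h₁ _ => ?_
    rw [Finset.sum_comm]
    refine Finset.sum_congr rfl fun h₂ _ => ?_
    have step2 : ∀ g : X → AFU M,
        (if ((fun x => afOplus (h₁ x) (h₂ x)) = g ∧ (∀ x, g x = f x ∨ f x = none))
          then T h₁ h₂ else 0)
        = if (fun x => afOplus (h₁ x) (h₂ x)) = g then
            (if (∀ x, g x = f x ∨ f x = none) then T h₁ h₂ else 0) else 0 := by
      intro g
      by_cases h1 : (fun x => afOplus (h₁ x) (h₂ x)) = g <;> simp [h1]
    rw [Finset.sum_congr rfl fun g _ => step2 g,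
      Finset.sum_ite_eq Finset.univ (fun x => afOplus (h₁ x) (h₂ x))
        (fun g => if (∀ x, g x = f x ∨ f x = none) then T h₁ h₂ else 0)]
    simp
  rw [lhs_eq]
  -- RHS: expand the zeta transforms
  have rhs_eq : ∀ (f₁ f₂ : {x : X // f x ≠ none} → Fin (M + 1)),
      (if ∀ x : {x : X // f x ≠ none},
          (f₁ x : ℕ) + (f₂ x : ℕ) = (((f x.1).getD 0 : Fin (M + 1)) : ℕ) then
        ∑ p ∈ Finset.HasAntidiagonal.antidiagonal s,
          afZeta c₁ (afGlue f f₁) p.1 * afZeta c₂ (afGlue f f₂) p.2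
      else 0)
      = ∑ h₁ : X → AFU M, ∑ h₂ : X → AFU M,
          if ((∀ x : {x : X // f x ≠ none},
              (f₁ x : ℕ) + (f₂ x : ℕ) = (((f x.1).getD 0 : Fin (M + 1)) : ℕ))
            ∧ (∀ x, h₁ x = afGlue f f₁ x ∨ afGlue f f₁ x = none)
            ∧ (∀ x, h₂ x = afGlue f f₂ x ∨ afGlue f f₂ x = none)) then T h₁ h₂ else 0 := by
    intro f₁ f₂
    have expand : (∑ p ∈ Finset.HasAntidiagonal.antidiagonal s,
          afZeta c₁ (afGlue f f₁) p.1 * afZeta c₂ (afGlue f f₂) p.2)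
        = ∑ h₁ : X → AFU M, ∑ h₂ : X → AFU M,
            if ((∀ x, h₁ x = afGlue f f₁ x ∨ afGlue f f₁ x = none)
              ∧ (∀ x, h₂ x = afGlue f f₂ x ∨ afGlue f f₂ x = none)) then T h₁ h₂ else 0 := by
      unfold afZeta
      rw [Finset.sum_congr rfl fun p _ => Finset.sum_mul_sum _ _ _ _]
      rw [Finset.sum_comm]
      refine Finset.sum_congr rfl fun h₁ _ => ?_
      rw [Finset.sum_comm]
      refine Finset.sum_congr rfl fun h₂ _ => ?_
      by_cases hA : ∀ x, h₁ x = afGlue f f₁ x ∨ afGlue f f₁ x = none <;>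
        by_cases hB : ∀ x, h₂ x = afGlue f f₂ x ∨ afGlue f f₂ x = none <;>
        simp [hA, hB, hT]
    by_cases hcond : ∀ x : {x : X // f x ≠ none},
        (f₁ x : ℕ) + (f₂ x : ℕ) = (((f x.1).getD 0 : Fin (M + 1)) : ℕ)
    · rw [if_pos hcond, expand]
      exact Finset.sum_congr rfl fun h₁ _ => Finset.sum_congr rfl fun h₂ _ =>
        (if_congr (and_iff_right hcond) rfl rfl).symm
    · rw [if_neg hcond]
      exact (Finset.sum_eq_zero fun h₁ _ => Finset.sum_eq_zero fun h₂ _ =>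
        if_neg fun h => hcond h.1).symm
  rw [Finset.sum_congr rfl fun f₁ _ => Finset.sum_congr rfl fun f₂ _ => rhs_eq f₁ f₂]
  rw [sum4comm]
  refine Finset.sum_congr rfl fun h₁ _ => Finset.sum_congr rfl fun h₂ _ => ?_
  -- the key counting identity, per (h₁, h₂)
  by_cases hC : ∀ x, afOplus (h₁ x) (h₂ x) = f x ∨ f x = none
  · rw [if_pos hC]
    -- the unique pair (f₁, f₂) contributing
    set a : {x : X // f x ≠ none} → Fin (M + 1) := fun x => (h₁ x.1).getD 0 with ha
    set b : {x : X // f x ≠ none} → Fin (M + 1) := fun x => (h₂ x.1).getD 0 with hb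
    -- at each x with f x ≠ none, h₁ x and h₂ x are some values summing to f x
    have hpt : ∀ x : {x : X // f x ≠ none},
        h₁ x.1 = some (a x) ∧ h₂ x.1 = some (b x) ∧
        ((a x : ℕ) + (b x : ℕ) = (((f x.1).getD 0 : Fin (M + 1)) : ℕ)) := by
      intro x
      have hfx : f x.1 ≠ none := x.2
      have hop : afOplus (h₁ x.1) (h₂ x.1) = f x.1 := (hC x.1).resolve_right hfx
      obtain ⟨m, hm⟩ : ∃ m, f x.1 = some m := Option.ne_none_iff_exists'.mp hfx
      match hu : h₁ x.1, hv : h₂ x.1 with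
      | none, _ => rw [hu] at hop; simp [afOplus, hm] at hop
      | some u, none => rw [hu, hv] at hop; simp [afOplus, hm] at hop
      | some u, some v =>
        rw [hu, hv] at hop
        rw [show (afOplus (some u) (some v) : AFU M)
            = if h : (u : ℕ) + (v : ℕ) ≤ M then
                some ⟨(u : ℕ) + (v : ℕ), Nat.lt_succ_of_le h⟩ else none from rfl] at hop
        by_cases hle : (u : ℕ) + (v : ℕ) ≤ M
        · rw [dif_pos hle, hm] at hop
          have hval : (u : ℕ) + (v : ℕ) = (m : ℕ) := by
            have := Option.some_injective _ hop
            exact congrArg Fin.val this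
          have hax : a x = u := by simp only [ha]; rw [hu]; rfl
          have hbx : b x = v := by simp only [hb]; rw [hv]; rfl
          refine ⟨by rw [hax], by rw [hbx], ?_⟩
          rw [hax, hbx, hm]
          simpa using hval
        · rw [dif_neg hle, hm] at hop; exact absurd hop (by simp)
    have hiff : ∀ (f₁ f₂ : {x : X // f x ≠ none} → Fin (M + 1)),
        ((∀ x : {x : X // f x ≠ none},
            (f₁ x : ℕ) + (f₂ x : ℕ) = (((f x.1).getD 0 : Fin (M + 1)) : ℕ))
          ∧ (∀ x, h₁ x = afGlue f f₁ x ∨ afGlue f f₁ x = none)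
          ∧ (∀ x, h₂ x = afGlue f f₂ x ∨ afGlue f f₂ x = none))
        ↔ (f₁ = a ∧ f₂ = b) := by
      intro f₁ f₂
      constructor
      · rintro ⟨-, hg1, hg2⟩
        constructor
        · funext x
          have hglue : afGlue f f₁ x.1 = some (f₁ x) := by
            simp [afGlue, x.2]
          have := (hg1 x.1).resolve_right (by rw [hglue]; simp)
          rw [hglue, (hpt x).1] at this
          exact Option.some_injective _ this.symm
        · funext x
          have hglue : afGlue f f₂ x.1 = some (f₂ x) := by
            simp [afGlue, x.2]
          have := (hg2 x.1).resolve_right (by rw [hglue]; simp)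
          rw [hglue, (hpt x).2.1] at this
          exact Option.some_injective _ this.symm
      · rintro ⟨rfl, rfl⟩
        refine ⟨fun x => (hpt x).2.2, fun x => ?_, fun x => ?_⟩
        · by_cases hx : f x = none
          · exact Or.inr (by simp [afGlue, hx])
          · exact Or.inl (by rw [show afGlue f a x = some (a ⟨x, hx⟩) from by
              simp [afGlue, hx]]; exact (hpt ⟨x, hx⟩).1)
        · by_cases hx : f x = none
          · exact Or.inr (by simp [afGlue, hx])
          · exact Or.inl (by rw [show afGlue f b x = some (b ⟨x, hx⟩) from by
              simp [afGlue, hx]]; exact (hpt ⟨x, hx⟩).2.1)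
    rw [Finset.sum_congr rfl fun f₁ _ => Finset.sum_congr rfl fun f₂ _ =>
      if_congr (hiff f₁ f₂) rfl rfl]
    symm
    simp [ite_and, Finset.sum_ite_eq']
  · rw [if_neg hC]
    refine (Finset.sum_eq_zero fun f₁ _ => Finset.sum_eq_zero fun f₂ _ => ?_).symm
    rw [if_neg]
    rintro ⟨hsum, hg1, hg2⟩
    apply hC
    intro x
    by_cases hx : f x = none
    · exact Or.inr hx
    · refine Or.inl ?_
      obtain ⟨m, hm⟩ : ∃ m, f x = some m := Option.ne_none_iff_exists'.mp hx
      have hglue1 : afGlue f f₁ x = some (f₁ ⟨x, hx⟩) := by simp [afGlue, hx]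
      have hglue2 : afGlue f f₂ x = some (f₂ ⟨x, hx⟩) := by simp [afGlue, hx]
      have e1 : h₁ x = some (f₁ ⟨x, hx⟩) :=
        ((hg1 x).resolve_right (by rw [hglue1]; simp)).trans hglue1
      have e2 : h₂ x = some (f₂ ⟨x, hx⟩) :=
        ((hg2 x).resolve_right (by rw [hglue2]; simp)).trans hglue2
      have hs := hsum ⟨x, hx⟩
      rw [hm] at hs
      simp only [Option.getD_some] at hs
      have hle : (f₁ ⟨x, hx⟩ : ℕ) + (f₂ ⟨x, hx⟩ : ℕ) ≤ M := by
        rw [hs]; exact Nat.lt_succ_iff.mp m.2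
      rw [e1, e2]
      rw [show (afOplus (some (f₁ ⟨x, hx⟩)) (some (f₂ ⟨x, hx⟩)) : AFU M)
          = if h : (f₁ ⟨x, hx⟩ : ℕ) + (f₂ ⟨x, hx⟩ : ℕ) ≤ M then
              some ⟨(f₁ ⟨x, hx⟩ : ℕ) + (f₂ ⟨x, hx⟩ : ℕ), Nat.lt_succ_of_le h⟩
            else none from rfl]
      rw [dif_pos hle, hm]
      congr 1
      exact Fin.ext hs
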